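/- Let X be a Banach space, ū ∈ X, ρ > 0, and F : B̄_ρ(ū) → Y an operator. Define N_ū(z) = F(ū+z) - F(ū) - DF(ū)z. Let B be a linear operator such that B∘DF(ū), B∘F and B∘N_ū are continuous. Suppose: (a) ‖I - B DF(ū)‖ = α < 1; (b) ‖B(F(ū) + N_ū(z))‖ ≤ b whenever ‖z‖ ≤ ρ; (c) the Lipschitz constant of z ↦ B N_ū(z) on {‖z‖ ≤ ρ} is less than K; (d) b/(1-α) < ρ; (e) K/(1-α) < 1. Then there exists a unique δu with ‖δu‖ ≤ ρ such that B F(ū + δu) = 0, and moreover ‖δu‖ ≤ ‖B F(ū)‖/(1 - α - K). -/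

import Mathlib

/-- Theorem 2.2 (contraction with preconditioning):
existence of a unique zero of B ∘ F in the closed ball of radius ρ around ū. -/
theorem contraction_with_preconditioning
    {X Y : Type*} [NormedAddCommGroup X] [NormedSpace ℝ X] [CompleteSpace X]
    [NormedAddCommGroup Y] [NormedSpace ℝ Y]
    (F : X → Y) (ubar : X) (ρ : ℝ) (hρ : 0 < ρ)
    (F' : X →L[ℝ] Y) (hF' : HasFDerivAt F F' ubar)
    (B : Y →L[ℝ] X)
    (Nbar : X → Y) (hN : ∀ z, Nbar z = F (ubar + z) - F ubar - F' z)
    (α b K : ℝ)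
    (ha : ‖ContinuousLinearMap.id ℝ X - B.comp F'‖ = α) (hα : α < 1)
    (hb : ∀ z : X, ‖z‖ ≤ ρ → ‖B (F ubar + Nbar z)‖ ≤ b)
    (hK : ∀ z₁ z₂ : X, ‖z₁‖ ≤ ρ → ‖z₂‖ ≤ ρ →
      ‖B (Nbar z₁) - B (Nbar z₂)‖ ≤ K * ‖z₁ - z₂‖)
    (hKpos : 0 ≤ K)
    (hd : b / (1 - α) < ρ)
    (he : K / (1 - α) < 1) :
    ∃ δu : X, ‖δu‖ ≤ ρ ∧ B (F (ubar + δu)) = 0 ∧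
      ‖δu‖ ≤ ‖B (F ubar)‖ / (1 - α - K) ∧
      ∀ δu' : X, ‖δu'‖ ≤ ρ → B (F (ubar + δu')) = 0 → δu' = δu := by
  have h1α : (0:ℝ) < 1 - α := by linarith
  have hα0 : 0 ≤ α := ha ▸ norm_nonneg _
  have hbρ : b < (1 - α) * ρ := by
    have := (div_lt_iff₀ h1α).mp hd; linarith
  have hK1 : K < 1 - α := by
    have := (div_lt_one h1α).mp he; linarith
  set L := ContinuousLinearMap.id ℝ X - B.comp F' with hL
  set T : X → X := fun z => z - B (F (ubar + z)) with hT
  have hTeq : ∀ z, T z = L z - (B (F ubar + Nbar z)) := by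
    intro z
    have hF : F (ubar + z) = F ubar + Nbar z + F' z := by
      rw [hN z]; abel
    simp only [hT, hF, hL, ContinuousLinearMap.sub_apply,
      ContinuousLinearMap.id_apply, ContinuousLinearMap.comp_apply, map_add]
    abel
  have hLnorm : ∀ w : X, ‖L w‖ ≤ α * ‖w‖ := fun w => ha ▸ L.le_opNorm w
  -- self-map
  have hself : ∀ z : X, ‖z‖ ≤ ρ → ‖T z‖ ≤ ρ := by
    intro z hz
    calc ‖T z‖ = ‖L z - B (F ubar + Nbar z)‖ := by rw [hTeq]
      _ ≤ ‖L z‖ + ‖B (F ubar + Nbar z)‖ := norm_sub_le _ _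
      _ ≤ α * ‖z‖ + b := add_le_add (hLnorm z) (hb z hz)
      _ ≤ α * ρ + b := by nlinarith
      _ ≤ ρ := by nlinarith
  -- contraction
  have hcontr : ∀ z₁ z₂ : X, ‖z₁‖ ≤ ρ → ‖z₂‖ ≤ ρ →
      ‖T z₁ - T z₂‖ ≤ (α + K) * ‖z₁ - z₂‖ := by
    intro z₁ z₂ h₁ h₂
    have : T z₁ - T z₂ = L (z₁ - z₂) - (B (Nbar z₁) - B (Nbar z₂)) := by
      rw [hTeq, hTeq, map_sub, map_add, map_add]; abel
    calc ‖T z₁ - T z₂‖ = ‖L (z₁ - z₂) - (B (Nbar z₁) - B (Nbar z₂))‖ := by rw [this]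
      _ ≤ ‖L (z₁ - z₂)‖ + ‖B (Nbar z₁) - B (Nbar z₂)‖ := norm_sub_le _ _
      _ ≤ α * ‖z₁ - z₂‖ + K * ‖z₁ - z₂‖ := add_le_add (hLnorm _) (hK z₁ z₂ h₁ h₂)
      _ = (α + K) * ‖z₁ - z₂‖ := by ring
  -- set up the contraction on the closed ball
  have hmem : ∀ z : X, z ∈ Metric.closedBall (0:X) ρ ↔ ‖z‖ ≤ ρ := by
    intro z; simp [Metric.mem_closedBall, dist_zero_right]
  haveI : CompleteSpace (Metric.closedBall (0:X) ρ) :=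
    IsClosed.completeSpace_coe (hs := Metric.isClosed_closedBall)
  haveI : Nonempty (Metric.closedBall (0:X) ρ) :=
    ⟨⟨0, by simp [hρ.le]⟩⟩
  set f : Metric.closedBall (0:X) ρ → Metric.closedBall (0:X) ρ :=
    fun z => ⟨T z, (hmem _).mpr (hself z ((hmem _).mp z.2))⟩ with hf
  have hc0 : (0:ℝ) ≤ α + K := by linarith
  have hcf : ContractingWith ⟨α + K, hc0⟩ f := by
    constructor
    · exact_mod_cast by show α + K < 1; linarith
    · apply LipschitzWith.of_dist_le_mul
      intro z₁ z₂
      simp only [hf, Subtype.dist_eq, dist_eq_norm]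
      exact_mod_cast hcontr z₁ z₂ ((hmem _).mp z₁.2) ((hmem _).mp z₂.2)
  set p : Metric.closedBall (0:X) ρ := ContractingWith.fixedPoint f hcf with hp
  set δu : X := (p : X) with hδ
  have hδmem : ‖δu‖ ≤ ρ := (hmem _).mp p.2
  have hfix : T δu = δu := congrArg Subtype.val (ContractingWith.fixedPoint_isFixedPt hcf)
  have hzero : B (F (ubar + δu)) = 0 := by
    have := hfix
    simp only [hT] at this
    have : δu - B (F (ubar + δu)) - δu = 0 := by rw [this]; abel
    simpa using this
  have hT0 : T 0 = -(B (F ubar)) := by simp [hT]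
  have hbound : ‖δu‖ ≤ ‖B (F ubar)‖ / (1 - α - K) := by
    have h0ρ : ‖(0:X)‖ ≤ ρ := by simp [hρ.le]
    have h1 : ‖T δu - T 0‖ ≤ (α + K) * ‖δu - 0‖ := hcontr δu 0 hδmem h0ρ
    have h2 : ‖δu‖ ≤ (α + K) * ‖δu‖ + ‖B (F ubar)‖ := by
      calc ‖δu‖ = ‖(T δu - T 0) + T 0‖ := by rw [hfix]; congr 1; abel
        _ ≤ ‖T δu - T 0‖ + ‖T 0‖ := norm_add_le _ _
        _ ≤ (α + K) * ‖δu‖ + ‖B (F ubar)‖ := by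
            have : ‖T δu - T 0‖ ≤ (α + K) * ‖δu‖ := by simpa using h1
            exact add_le_add this (le_of_eq (by rw [hT0, norm_neg]))
    rw [le_div_iff₀ (by linarith : (0:ℝ) < 1 - α - K)]
    nlinarith
  refine ⟨δu, hδmem, hzero, hbound, ?_⟩
  intro δu' hδu' hz'
  have hfix' : T δu' = δu' := by simp [hT, hz']
  have : f ⟨δu', (hmem _).mpr hδu'⟩ = ⟨δu', (hmem _).mpr hδu'⟩ := by
    apply Subtype.ext; exact hfix'
  have h5 : (⟨δu', (hmem _).mpr hδu'⟩ : Metric.closedBall (0:X) ρ) = p := hcf.fixedPoint_unique this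
  exact congrArg Subtype.val h5
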